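/- In any Leibniz algebra over a field of characteristic ≠ 2, if x satisfies xx = 0 for all x (so the algebra is a Lie algebra written with left-normed products), then for any elements x₁, x₂, x₃, x₄, the full alternation (skew-symmetrization over all permutations of x₁,...,x₄ with sign) of the left-normed product ((x₁x₂)x₃)x₄ equals one half of the alternation of (x₁x₂)(x₃x₄). -/

import Mathlib

open Equiv

/-- In any Leibniz algebra over a field of characteristic ≠ 2,
if `x*x = 0` for all `x`, then for any `x₁,x₂,x₃,x₄` the full alternation of the
left-normed product `((x₁x₂)x₃)x₄` equals one half of the alternation of
`(x₁x₂)(x₃x₄)`. -/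
theorem alternation_left_normed_eq_half (Φ L : Type*) [Field Φ] (h2 : (2 : Φ) ≠ 0)
    [NonUnitalNonAssocRing L] [Module Φ L] [SMulCommClass Φ L L] [IsScalarTower Φ L L]
    (leib : ∀ x y z : L, (x * y) * z = (x * z) * y + x * (y * z))
    (sq : ∀ x : L, x * x = 0) (x : Fin 4 → L) :
    ∑ σ : Perm (Fin 4), ((Perm.sign σ : ℤ)) •
        (((x (σ 0) * x (σ 1)) * x (σ 2)) * x (σ 3)) =
      (2 : Φ)⁻¹ • ∑ σ : Perm (Fin 4), ((Perm.sign σ : ℤ)) •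
        ((x (σ 0) * x (σ 1)) * (x (σ 2) * x (σ 3))) := by
  set f : Perm (Fin 4) → L := fun σ =>
    ((Perm.sign σ : ℤ)) • (((x (σ 0) * x (σ 1)) * x (σ 2)) * x (σ 3)) with hf
  set g : Perm (Fin 4) → L := fun σ =>
    ((Perm.sign σ : ℤ)) • (((x (σ 0) * x (σ 1)) * x (σ 3)) * x (σ 2)) with hg
  have hswap : ∑ σ : Perm (Fin 4), g σ = -∑ σ : Perm (Fin 4), f σ := by
    rw [← Finset.sum_neg_distrib]
    refine Fintype.sum_equiv (Equiv.mulRight (Equiv.swap (2 : Fin 4) 3)) _ _ ?_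
    intro σ
    simp only [hg, hf, Equiv.coe_mulRight, Perm.mul_apply]
    have h0 : Equiv.swap (2 : Fin 4) 3 0 = 0 := by decide
    have h1 : Equiv.swap (2 : Fin 4) 3 1 = 1 := by decide
    have h2' : Equiv.swap (2 : Fin 4) 3 2 = 3 := by decide
    have h3 : Equiv.swap (2 : Fin 4) 3 3 = 2 := by decide
    rw [h0, h1, h2', h3, Perm.sign_mul, Perm.sign_swap (by decide)]
    push_cast
    rw [mul_neg_one, neg_smul, neg_neg]
  have key : ∑ σ : Perm (Fin 4), ((Perm.sign σ : ℤ)) •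
      ((x (σ 0) * x (σ 1)) * (x (σ 2) * x (σ 3))) =
      (2 : Φ) • ∑ σ : Perm (Fin 4), f σ := by
    have step : ∀ σ : Perm (Fin 4), ((Perm.sign σ : ℤ)) •
        ((x (σ 0) * x (σ 1)) * (x (σ 2) * x (σ 3))) = f σ - g σ := by
      intro σ
      simp only [hf, hg]
      rw [← smul_sub]
      congr 1
      have h := leib (x (σ 0) * x (σ 1)) (x (σ 2)) (x (σ 3))
      rw [eq_sub_iff_add_eq, add_comm, ← h]
    calc ∑ σ : Perm (Fin 4), ((Perm.sign σ : ℤ)) •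
          ((x (σ 0) * x (σ 1)) * (x (σ 2) * x (σ 3)))
        = ∑ σ : Perm (Fin 4), (f σ - g σ) := Finset.sum_congr rfl (fun σ _ => step σ)
      _ = (∑ σ : Perm (Fin 4), f σ) - ∑ σ : Perm (Fin 4), g σ := Finset.sum_sub_distrib f g
      _ = (∑ σ : Perm (Fin 4), f σ) + ∑ σ : Perm (Fin 4), f σ := by rw [hswap, sub_neg_eq_add]
      _ = (2 : Φ) • ∑ σ : Perm (Fin 4), f σ := (two_smul Φ _).symm
  rw [key, inv_smul_smul₀ h2]
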